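/- arXiv:1602.04960 — 2 statements merged into one kernel-verified Lean document; each statement's English description precedes it below -/
import Mathlib

section
/- Let F : [0,1] → [0,1] be a distribution function with F(0) = 0 and F(1) = 1 (i.e., F is right-continuous and non-decreasing), and let F* be its pseudo-inverse defined by F*(u) = inf{x ∈ [0,1] : F(x) ≥ u}. Then sup_{u∈[0,1]} |F*(u) − u| ≤ sup_{x∈[0,1]} |F(x) − x|. -/
open Set Filter Topology

/-- Let `F : [0,1] → [0,1]` be a distribution function with `F 0 = 0` and `F 1 = 1`
(non-decreasing and right-continuous on `[0,1]`), and let `F*` be its pseudo-inverse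
`F* u = inf {x ∈ [0,1] | F x ≥ u}`. Then `sup |F* u - u| ≤ sup |F x - x|` over `[0,1]`. -/
theorem pseudoInverse_dist_to_id_le (F : ℝ → ℝ)
    (hmono : MonotoneOn F (Icc 0 1))
    (hrc : ∀ x ∈ Icc (0:ℝ) 1, ContinuousWithinAt F (Ici x) x)
    (hrange : ∀ x ∈ Icc (0:ℝ) 1, F x ∈ Icc (0:ℝ) 1)
    (hF0 : F 0 = 0) (hF1 : F 1 = 1) :
    ∀ u ∈ Icc (0:ℝ) 1,
      |sInf {x ∈ Icc (0:ℝ) 1 | u ≤ F x} - u| ≤ sSup ((fun x => |F x - x|) '' Icc 0 1) := by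
  intro u hu
  set A := {x ∈ Icc (0:ℝ) 1 | u ≤ F x} with hA
  have h1A : (1:ℝ) ∈ A := ⟨⟨zero_le_one, le_rfl⟩, by rw [hF1]; exact hu.2⟩
  have hAne : A.Nonempty := ⟨1, h1A⟩
  have hbdd : BddBelow A := ⟨0, fun x hx => hx.1.1⟩
  set m := sInf A with hm
  have hm0 : 0 ≤ m := le_csInf hAne fun x hx => hx.1.1
  have hm1 : m ≤ 1 := csInf_le hbdd h1A
  have hmI : m ∈ Icc (0:ℝ) 1 := ⟨hm0, hm1⟩
  set S := sSup ((fun x => |F x - x|) '' Icc 0 1) with hS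
  have hbddS : BddAbove ((fun x => |F x - x|) '' Icc (0:ℝ) 1) := by
    refine ⟨1, ?_⟩
    rintro y ⟨x, hx, rfl⟩
    have h1 := hrange x hx
    rw [abs_le]
    constructor
    · linarith [h1.1, hx.2]
    · linarith [h1.2, hx.1]
  have hle : ∀ x ∈ Icc (0:ℝ) 1, |F x - x| ≤ S :=
    fun x hx => le_csSup hbddS ⟨x, hx, rfl⟩
  have hS0 : 0 ≤ S :=
    le_trans (abs_nonneg _) (hle 0 ⟨le_rfl, zero_le_one⟩)
  -- u ≤ F m
  have hFm : u ≤ F m := by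
    have hcl : m ∈ closure A := csInf_mem_closure hAne hbdd
    have hsub : A ⊆ Ici m := fun x hx => csInf_le hbdd hx
    have hts : Tendsto F (𝓝[A] m) (𝓝 (F m)) :=
      (hrc m hmI).mono_left (nhdsWithin_mono m hsub)
    have hne : (𝓝[A] m).NeBot := mem_closure_iff_nhdsWithin_neBot.mp hcl
    refine ge_of_tendsto hts ?_
    exact eventually_nhdsWithin_of_forall fun x hx => hx.2
  have h1 : u - m ≤ S := by
    have := hle m hmI
    rw [abs_le] at this
    linarith [this.1]
  have h2 : m - u ≤ S := by
    rcases le_or_gt 1 (u + S) with h | h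
    · linarith
    · have huS : u + S ∈ Icc (0:ℝ) 1 := ⟨by linarith [hu.1], le_of_lt h⟩
      have := hle (u + S) huS
      rw [abs_le] at this
      have hmem : u + S ∈ A := ⟨huS, by linarith [this.1]⟩
      have := csInf_le hbdd hmem
      linarith
  rw [abs_le]
  exact ⟨by linarith, by linarith⟩
end

section
/- Let σ be a permutation of size n and let ρ ∈ S_K and π_1,…,π_r be permutations with sizes summing to K. Let S_ρ be the set of tuples (s_1,…,s_r) of subsets of [n] with |s_i| = |π_i|, pat_{s_i}(σ) = π_i for all i, and pat_I(σ) = ρ where I = s_1 ∪ ⋯ ∪ s_r (in particular |I| = K). Then |S_ρ| = d^ρ_{π_1,…,π_r} · (number of K-element subsets I ⊆ [n] with pat_I(σ) = ρ), where d^ρ_{π_1,…,π_r} is the number of ordered set-partitions (I_1,…,I_r) of [K] with |I_i| = |π_i| and pat_{I_i}(ρ) = π_i for all i. -/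
/-- Subsequence of a list given by a set of (0-indexed) positions. -/
def subseqAt (l : List ℕ) (I : Finset ℕ) : List ℕ :=
  ((List.range l.length).filter (· ∈ I)).map (fun i => l.getD i 0)

/-- Standardization of a list of distinct values: each value is replaced by its rank
(1-indexed) among the values of the list. -/
def List.std (l : List ℕ) : List ℕ := l.map (fun x => (l.filter (· < x)).length + 1)

/-- The pattern of the permutation `l` (one-line notation) induced by the set `I`
of (0-indexed) positions. -/
def patL (l : List ℕ) (I : Finset ℕ) : List ℕ := (subseqAt l I).std

open List Finset

lemma filter_range_eq_sort {n : ℕ} {I : Finset ℕ} (hI : ∀ i ∈ I, i < n) :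
    (List.range n).filter (· ∈ I) = I.sort (· ≤ ·) := by
  refine (fun hp h1 h2 => List.Perm.eq_of_pairwise' (r := (· ≤ ·)) h1 h2 hp) ?_ ?_ ?_
  · rw [List.perm_ext_iff_of_nodup ((List.nodup_range (n := n)).filter _) (I.sort_nodup _)]
    intro a
    simp only [List.mem_filter, List.mem_range, Finset.mem_sort, decide_eq_true_eq]
    exact ⟨fun h => h.2, fun h => ⟨hI a h, h⟩⟩
  · exact ((List.pairwise_lt_range (n := n)).filter _).imp le_of_lt
  · exact I.pairwise_sort _

lemma subseqAt_eq_map_sort {l : List ℕ} {I : Finset ℕ} (hI : ∀ i ∈ I, i < l.length) :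
    subseqAt l I = (I.sort (· ≤ ·)).map (fun i => l.getD i 0) := by
  rw [subseqAt, filter_range_eq_sort hI]

lemma length_subseqAt {l : List ℕ} {I : Finset ℕ} (hI : ∀ i ∈ I, i < l.length) :
    (subseqAt l I).length = I.card := by
  rw [subseqAt_eq_map_sort hI, List.length_map, Finset.length_sort]

lemma mem_subseqAt {l : List ℕ} {I : Finset ℕ} {x : ℕ} (hx : x ∈ subseqAt l I) : x ∈ l := by
  rw [subseqAt] at hx
  obtain ⟨i, hi, rfl⟩ := List.mem_map.mp hx
  have hilen : i < l.length := by
    have := List.mem_filter.mp hi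
    simpa using this.1
  rw [List.getD_eq_getElem _ 0 hilen]
  exact List.getElem_mem hilen

lemma nodup_subseqAt {l : List ℕ} (hl : l.Nodup) (I : Finset ℕ) : (subseqAt l I).Nodup := by
  rw [subseqAt]
  apply List.Nodup.map_on _ ((List.nodup_range).filter _)
  intro x hx y hy hxy
  have hxl : x < l.length := by have := List.mem_filter.mp hx; simpa using this.1
  have hyl : y < l.length := by have := List.mem_filter.mp hy; simpa using this.1
  rw [List.getD_eq_getElem _ 0 hxl, List.getD_eq_getElem _ 0 hyl] at hxy
  have : (⟨x,hxl⟩ : Fin l.length) = ⟨y,hyl⟩ := List.nodup_iff_injective_get.mp hl (by simpa using hxy)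
  simpa using this
-- strict mono of rank function on members
lemma rank_lt_iff {m : List ℕ} {x y : ℕ} (hx : x ∈ m) :
    (m.filter (· < x)).length < (m.filter (· < y)).length ↔ x < y := by
  constructor
  · intro h
    by_contra hxy
    push_neg at hxy  -- y ≤ x
    have : m.filter (· < y) <+ m.filter (· < x) :=
      List.monotone_filter_right m (fun z hz => by
        simp only [decide_eq_true_eq] at hz ⊢; omega)
    exact absurd this.length_le (by omega)
  · intro hlt
    have hsub : m.filter (· < x) <+ m.filter (· < y) :=
      List.monotone_filter_right m (fun z hz => by
        simp only [decide_eq_true_eq] at hz ⊢; omega)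
    rcases Nat.lt_or_ge (m.filter (· < x)).length (m.filter (· < y)).length with h | h
    · exact h
    · exfalso
      have heq : m.filter (· < x) = m.filter (· < y) :=
        hsub.eq_of_length_le h
      have : x ∈ m.filter (· < y) := by
        simp only [List.mem_filter, decide_eq_true_eq]; exact ⟨hx, hlt⟩
      rw [← heq] at this
      simp only [List.mem_filter, decide_eq_true_eq] at this
      omega

lemma std_map_eq {m : List ℕ} {f : ℕ → ℕ}
    (hf : ∀ x ∈ m, ∀ y ∈ m, (x < y ↔ f x < f y)) : (m.map f).std = m.std := by
  unfold List.std
  rw [List.map_map]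
  apply List.map_congr_left
  intro x hx
  simp only [Function.comp_apply]
  rw [List.filter_map, List.length_map]
  congr 2
  apply List.filter_congr
  intro y hy
  simp only [Function.comp_apply, decide_eq_decide]
  exact (hf y hy x hx).symm

lemma subseqAt_map {l : List ℕ} {f : ℕ → ℕ} (I : Finset ℕ) :
    subseqAt (l.map f) I = (subseqAt l I).map f := by
  unfold subseqAt
  rw [List.length_map, List.map_map]
  apply List.map_congr_left
  intro i hi
  have hil : i < l.length := by have := List.mem_filter.mp hi; simpa using this.1
  simp only [Function.comp_apply]
  rw [List.getD_eq_getElem _ 0 hil, List.getD_eq_getElem _ 0 (by simpa using hil)]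
  simp

lemma patL_std {m : List ℕ} (hm : m.Nodup) (P : Finset ℕ) :
    patL m.std P = patL m P := by
  unfold patL
  have h1 : subseqAt m.std P = (subseqAt m P).map (fun x => (m.filter (· < x)).length + 1) :=
    subseqAt_map P
  rw [h1]
  apply std_map_eq
  intro x hx y hy
  have hx' := mem_subseqAt hx
  constructor
  · intro h
    have := (rank_lt_iff (y := y) hx').mpr h
    omega
  · intro h
    exact (rank_lt_iff (y := y) hx').mp (by omega)
section B
open List Finset

lemma getD_sort_mem {I : Finset ℕ} {k : ℕ} (hk : k < I.card) :
    (I.sort (· ≤ ·)).getD k 0 ∈ I := by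
  have hlen : k < (I.sort (· ≤ ·)).length := by rwa [Finset.length_sort]
  rw [List.getD_eq_getElem _ 0 hlen]
  exact (Finset.mem_sort _).mp (List.getElem_mem hlen)

lemma getD_sort_strictMonoOn {I : Finset ℕ} {a b : ℕ} (ha : a < I.card) (hb : b < I.card)
    (hab : a < b) : (I.sort (· ≤ ·)).getD a 0 < (I.sort (· ≤ ·)).getD b 0 := by
  have ha' : a < (I.sort (· ≤ ·)).length := by rwa [Finset.length_sort]
  have hb' : b < (I.sort (· ≤ ·)).length := by rwa [Finset.length_sort]
  rw [List.getD_eq_getElem _ 0 ha', List.getD_eq_getElem _ 0 hb']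
  exact List.SortedLT.strictMono_get (I.sortedLT_sort) (show (⟨a,ha'⟩ : Fin _) < ⟨b,hb'⟩ from hab)

lemma subseqAt_subseqAt {l : List ℕ} {I P : Finset ℕ}
    (hI : ∀ i ∈ I, i < l.length) (hP : ∀ k ∈ P, k < I.card) :
    subseqAt (subseqAt l I) P = subseqAt l (P.image (fun k => (I.sort (· ≤ ·)).getD k 0)) := by
  set L := I.sort (· ≤ ·) with hL
  set S := P.image (fun k => L.getD k 0) with hS
  have hLlen : L.length = I.card := Finset.length_sort _
  have hSmem : ∀ x ∈ S, x < l.length := by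
    intro x hx
    obtain ⟨k, hk, rfl⟩ := Finset.mem_image.mp hx
    exact hI _ (getD_sort_mem (hP k hk))
  have hlen : (subseqAt l I).length = I.card := length_subseqAt hI
  -- LHS
  have base : subseqAt l I = L.map (fun i => l.getD i 0) := subseqAt_eq_map_sort hI
  have lhs_eq : subseqAt (subseqAt l I) P
      = (((List.range I.card).filter (· ∈ P)).map (fun k => L.getD k 0)).map (fun i => l.getD i 0) := by
    rw [base, subseqAt_map]
    unfold subseqAt
    rw [hLlen]
  rw [lhs_eq]
  have rhs_eq : subseqAt l S = ((List.range l.length).filter (· ∈ S)).map (fun i => l.getD i 0) := rfl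
  rw [rhs_eq]
  congr 1
  -- two sorted nodup lists with the same elements
  refine (fun hp h1 h2 => List.Perm.eq_of_pairwise' (r := (· ≤ ·)) h1 h2 hp) ?_ ?_ ?_
  · apply (List.perm_ext_iff_of_nodup _ _).mpr
    · intro a
      simp only [List.mem_map, List.mem_filter, List.mem_range, decide_eq_true_eq, hS,
        Finset.mem_image]
      constructor
      · rintro ⟨k, ⟨hk1, hk2⟩, rfl⟩
        exact ⟨hI _ (getD_sort_mem (by omega)), k, hk2, rfl⟩
      · rintro ⟨_, k, hk, rfl⟩
        exact ⟨k, ⟨hP k hk, hk⟩, rfl⟩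
    · apply List.Nodup.map_on _ ((List.nodup_range).filter _)
      intro x hx y hy hxy
      have hx' : x < I.card := by have := List.mem_filter.mp hx; simpa using this.1
      have hy' : y < I.card := by have := List.mem_filter.mp hy; simpa using this.1
      by_contra hne
      rcases Nat.lt_or_ge x y with h | h
      · exact absurd hxy (Nat.ne_of_lt (getD_sort_strictMonoOn hx' hy' h))
      · have : y < x := by omega
        exact absurd hxy.symm (Nat.ne_of_lt (getD_sort_strictMonoOn hy' hx' this))
    · exact (List.nodup_range).filter _
  · rw [List.pairwise_map]
    apply List.Pairwise.imp_of_mem ?_ (((List.pairwise_lt_range (n := I.card)).filter (· ∈ P)) : _)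
    intro a b ha hb hab
    have ha' : a < I.card := by have := List.mem_filter.mp ha; simpa using this.1
    have hb' : b < I.card := by have := List.mem_filter.mp hb; simpa using this.1
    exact le_of_lt (getD_sort_strictMonoOn ha' hb' hab)
  · exact ((List.pairwise_lt_range).filter _).imp le_of_lt

end B
section C
open List Finset

lemma patL_patL {l : List ℕ} (hl : l.Nodup) {I P : Finset ℕ}
    (hI : ∀ i ∈ I, i < l.length) (hP : ∀ k ∈ P, k < I.card) :
    patL (patL l I) P = patL l (P.image (fun k => (I.sort (· ≤ ·)).getD k 0)) := by
  show patL (subseqAt l I).std P = _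
  rw [patL_std (nodup_subseqAt hl I) P]
  show (subseqAt (subseqAt l I) P).std = _
  rw [subseqAt_subseqAt hI hP]
  rfl

lemma length_patL {l : List ℕ} {J : Finset ℕ} (hJ : ∀ i ∈ J, i < l.length) :
    (patL l J).length = J.card := by
  show (subseqAt l J).std.length = _
  rw [List.std, List.length_map, length_subseqAt hJ]

-- Fin-level: sort of image under val
lemma sort_image_val {m : ℕ} (I : Finset (Fin m)) :
    (I.image Fin.val).sort (· ≤ ·) = (I.sort (· ≤ ·)).map Fin.val := by
  refine (fun hp h1 h2 => List.Perm.eq_of_pairwise' (r := (· ≤ ·)) h1 h2 hp) ?_ ?_ ?_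
  · refine (List.perm_ext_iff_of_nodup ((I.image Fin.val).sort_nodup _)
      ((I.sort_nodup _).map Fin.val_injective)).mpr ?_
    intro a
    simp [Finset.mem_sort, Finset.mem_image, List.mem_map]
  · exact (I.image Fin.val).pairwise_sort _
  · rw [List.pairwise_map]
    exact List.Pairwise.imp (fun h => h) (I.pairwise_sort (· ≤ ·))

lemma val_orderIsoOfFin {m k : ℕ} (I : Finset (Fin m)) (h : I.card = k) (i : Fin k) :
    ((I.orderIsoOfFin h i : Fin m) : ℕ) = ((I.image Fin.val).sort (· ≤ ·)).getD i 0 := by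
  rw [sort_image_val]
  have hlen : (i : ℕ) < (I.sort (· ≤ ·)).length := by rw [Finset.length_sort, h]; exact i.2
  rw [List.getD_eq_getElem _ 0 (by simpa using hlen)]
  rw [Finset.coe_orderIsoOfFin_apply, Finset.orderEmbOfFin_apply]
  simp

end C
section D
open Finset

lemma disjoint_of_card_biUnion {ι α : Type*} [DecidableEq α] [DecidableEq ι]
    (s : Finset ι) (t : ι → Finset α)
    (h : (s.biUnion t).card = ∑ i ∈ s, (t i).card) :
    ∀ i ∈ s, ∀ j ∈ s, i ≠ j → Disjoint (t i) (t j) := by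
  induction s using Finset.induction with
  | empty => simp
  | @insert a s' ha ih =>
    rw [Finset.biUnion_insert, Finset.sum_insert ha] at h
    have h1 : (t a ∪ s'.biUnion t).card ≤ (t a).card + (s'.biUnion t).card :=
      Finset.card_union_le _ _
    have h2 : (s'.biUnion t).card ≤ ∑ i ∈ s', (t i).card := Finset.card_biUnion_le
    have e2 : (s'.biUnion t).card = ∑ i ∈ s', (t i).card := by omega
    have e1 : (t a ∪ s'.biUnion t).card = (t a).card + (s'.biUnion t).card := by omega
    have hd : Disjoint (t a) (s'.biUnion t) := Finset.card_union_eq_card_add_card.mp e1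
    intro i hi j hj hij
    rcases Finset.mem_insert.mp hi with rfl | hi' <;>
      rcases Finset.mem_insert.mp hj with rfl | hj'
    · exact absurd rfl hij
    · exact hd.mono_right (Finset.subset_biUnion_of_mem t hj')
    · exact (hd.mono_right (Finset.subset_biUnion_of_mem t hi')).symm
    · exact ih e2 i hi' j hj' hij

end D
section E
open Finset

lemma main_fin {n K : ℕ} {σ : List ℕ} (hσnd : σ.Nodup) (hσlen : σ.length = n)
    (I : Finset (Fin n)) (hc : I.card = K) (Q : Finset (Fin K)) :
    patL (patL σ (I.image Fin.val)) (Q.image Fin.val)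
      = patL σ ((Q.image (fun k => (I.orderIsoOfFin hc k : Fin n))).image Fin.val) := by
  have hI : ∀ i ∈ I.image Fin.val, i < σ.length := by
    intro i hi; obtain ⟨x, _, rfl⟩ := Finset.mem_image.mp hi; rw [hσlen]; exact x.2
  have hP : ∀ k ∈ Q.image Fin.val, k < (I.image Fin.val).card := by
    intro k hk; obtain ⟨x, _, rfl⟩ := Finset.mem_image.mp hk
    rw [Finset.card_image_of_injective _ Fin.val_injective, hc]; exact x.2
  rw [patL_patL hσnd hI hP]
  congr 1
  rw [Finset.image_image, Finset.image_image]
  congr 1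
  funext k
  exact (val_orderIsoOfFin I hc k).symm

lemma hc_of {n K : ℕ} {σ ρ : List ℕ} (hσlen : σ.length = n) (hρlen : ρ.length = K)
    {I : Finset (Fin n)} (h3 : patL σ (I.image Fin.val) = ρ) : I.card = K := by
  have hb : ∀ i ∈ I.image Fin.val, i < σ.length := by
    intro i hi; obtain ⟨x, _, rfl⟩ := Finset.mem_image.mp hi; rw [hσlen]; exact x.2
  have := congrArg List.length h3
  rw [length_patL hb, Finset.card_image_of_injective _ Fin.val_injective] at this
  rw [this, hρlen]

lemma iso_coe_injective {n K : ℕ} (I : Finset (Fin n)) (hc : I.card = K) :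
    Function.Injective (fun k : Fin K => (I.orderIsoOfFin hc k : Fin n)) :=
  Subtype.coe_injective.comp (I.orderIsoOfFin hc).injective

lemma image_iso_congr {n K : ℕ} {I I' : Finset (Fin n)} (h : I = I')
    {hc : I.card = K} {hc' : I'.card = K} {Q Q' : Finset (Fin K)} (hQ : Q = Q') :
    Q.image (fun k => (I.orderIsoOfFin hc k : Fin n))
      = Q'.image (fun k => (I'.orderIsoOfFin hc' k : Fin n)) := by
  subst h; subst hQ; rfl

lemma iso_coe_congr {n K : ℕ} {I I' : Finset (Fin n)} (h : I = I')
    (hc : I.card = K) (hc' : I'.card = K) (k : Fin K) :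
    (I.orderIsoOfFin hc k : Fin n) = (I'.orderIsoOfFin hc' k : Fin n) := by
  subst h; rfl

/-- recovering `s i` from its rank-set. -/
lemma sP_eq {n K r : ℕ} {s : Fin r → Finset (Fin n)}
    (hc : (Finset.univ.biUnion s).card = K) (i : Fin r) :
    ((Finset.univ.filter
        (fun k => ((Finset.univ.biUnion s).orderIsoOfFin hc k : Fin n) ∈ s i)).image
      (fun k => ((Finset.univ.biUnion s).orderIsoOfFin hc k : Fin n))) = s i := by
  set I := Finset.univ.biUnion s with hI
  ext a
  simp only [Finset.mem_image, Finset.mem_filter, Finset.mem_univ, true_and]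
  constructor
  · rintro ⟨k, hk, rfl⟩; exact hk
  · intro ha
    have haI : a ∈ I := Finset.mem_biUnion.mpr ⟨i, Finset.mem_univ i, ha⟩
    have e : ((I.orderIsoOfFin hc ((I.orderIsoOfFin hc).symm ⟨a, haI⟩)) : Fin n) = a :=
      congrArg Subtype.val ((I.orderIsoOfFin hc).apply_symm_apply ⟨a, haI⟩)
    exact ⟨(I.orderIsoOfFin hc).symm ⟨a, haI⟩, cast (congrArg (· ∈ s i) e.symm) ha, e⟩

end E
section F
open Finset

lemma forward_prop {n K r : ℕ} {σ ρ : List ℕ} {π : Fin r → List ℕ}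
    (hσnd : σ.Nodup) (hσlen : σ.length = n) (hK : ∑ i, (π i).length = K)
    {s : Fin r → Finset (Fin n)}
    (h1 : ∀ i, (s i).card = (π i).length)
    (h2 : ∀ i, patL σ ((s i).image Fin.val) = π i)
    (h3 : patL σ ((Finset.univ.biUnion s).image Fin.val) = ρ)
    (hc : (Finset.univ.biUnion s).card = K) :
    (∀ i j, i ≠ j → Disjoint
        (Finset.univ.filter
          (fun k => ((Finset.univ.biUnion s).orderIsoOfFin hc k : Fin n) ∈ s i))
        (Finset.univ.filter
          (fun k => ((Finset.univ.biUnion s).orderIsoOfFin hc k : Fin n) ∈ s j))) ∧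
    Finset.univ.biUnion (fun i => Finset.univ.filter
        (fun k => ((Finset.univ.biUnion s).orderIsoOfFin hc k : Fin n) ∈ s i)) = Finset.univ ∧
    (∀ i, (Finset.univ.filter
        (fun k => ((Finset.univ.biUnion s).orderIsoOfFin hc k : Fin n) ∈ s i)).card
        = (π i).length) ∧
    (∀ i, patL ρ ((Finset.univ.filter
        (fun k => ((Finset.univ.biUnion s).orderIsoOfFin hc k : Fin n) ∈ s i)).image Fin.val)
        = π i) := by
  have hdisj_s : ∀ i j : Fin r, i ≠ j → Disjoint (s i) (s j) := by
    have hcs : (Finset.univ.biUnion s).card = ∑ i, (s i).card := by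
      rw [hc]
      rw [show ∑ i, (s i).card = K from by
        rw [← hK]; exact Finset.sum_congr rfl (fun i _ => h1 i)]
    intro i j hij
    exact disjoint_of_card_biUnion Finset.univ s hcs i (Finset.mem_univ i)
      j (Finset.mem_univ j) hij
  refine ⟨?_, ?_, ?_, ?_⟩
  · intro i j hij
    rw [Finset.disjoint_left]
    intro k hki hkj
    simp only [Finset.mem_filter, Finset.mem_univ, true_and] at hki hkj
    exact (Finset.disjoint_left.mp (hdisj_s i j hij)) hki hkj
  · ext k
    simp only [Finset.mem_biUnion, Finset.mem_univ, true_and, iff_true,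
      Finset.mem_filter]
    have : ((Finset.univ.biUnion s).orderIsoOfFin hc k : Fin n) ∈ Finset.univ.biUnion s :=
      ((Finset.univ.biUnion s).orderIsoOfFin hc k).2
    obtain ⟨i, _, hi⟩ := Finset.mem_biUnion.mp this
    exact ⟨i, hi⟩
  · intro i
    have := congrArg Finset.card (sP_eq hc i)
    rw [Finset.card_image_of_injective _ (iso_coe_injective _ hc)] at this
    rw [this]
    exact h1 i
  · intro i
    rw [← h3, main_fin hσnd hσlen _ hc _, sP_eq hc i]
    exact h2 i

end F

/-- Let `σ ∈ S_n`, `ρ ∈ S_K` and `π_1,…,π_r` with sizes summing to `K`. The number of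
tuples `(s_1,…,s_r)` of subsets of `[n]` with `pat_{s_i}(σ) = π_i` for all `i` and
`pat_{s_1 ∪ ⋯ ∪ s_r}(σ) = ρ` equals `d^ρ_{π_1,…,π_r}` times the number of `K`-element
subsets `I ⊆ [n]` with `pat_I(σ) = ρ`, where `d^ρ_{π_1,…,π_r}` is the number of ordered
set-partitions `(I_1,…,I_r)` of `[K]` with `|I_i| = |π_i|` and `pat_{I_i}(ρ) = π_i`. -/
theorem card_S_rho_eq_d_mul_occurrences
    (n K r : ℕ) (σ ρ : List ℕ) (π : Fin r → List ℕ)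
    (hσ : σ.Perm (List.range' 1 n)) (hρ : ρ.Perm (List.range' 1 K))
    (hπ : ∀ i, (π i).Perm (List.range' 1 (π i).length))
    (hK : ∑ i, (π i).length = K) :
    Nat.card {s : Fin r → Finset (Fin n) //
        (∀ i, (s i).card = (π i).length) ∧
        (∀ i, patL σ ((s i).image Fin.val) = π i) ∧
        patL σ ((Finset.univ.biUnion s).image Fin.val) = ρ} =
      Nat.card {P : Fin r → Finset (Fin K) //
        (∀ i j, i ≠ j → Disjoint (P i) (P j)) ∧
        Finset.univ.biUnion P = Finset.univ ∧
        (∀ i, (P i).card = (π i).length) ∧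
        (∀ i, patL ρ ((P i).image Fin.val) = π i)} *
      Nat.card {I : Finset (Fin n) // I.card = K ∧ patL σ (I.image Fin.val) = ρ} := by
  have hσlen : σ.length = n := by simpa using hσ.length_eq
  have hρlen : ρ.length = K := by simpa using hρ.length_eq
  have hσnd : σ.Nodup := hσ.nodup_iff.mpr (by simp [List.nodup_range'])
  rw [← Nat.card_prod]
  apply Nat.card_congr
  refine Equiv.ofBijective
    (fun sp =>
      (⟨fun i => Finset.univ.filter
          (fun k => ((Finset.univ.biUnion sp.1).orderIsoOfFin
              (hc_of hσlen hρlen sp.2.2.2) k : Fin n) ∈ sp.1 i),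
        forward_prop hσnd hσlen hK sp.2.1 sp.2.2.1 sp.2.2.2 (hc_of hσlen hρlen sp.2.2.2)⟩,
       ⟨Finset.univ.biUnion sp.1, hc_of hσlen hρlen sp.2.2.2, sp.2.2.2⟩))
    ⟨?_, ?_⟩
  · -- injectivity
    rintro ⟨s, hs1, hs2, hs3⟩ ⟨s', hs1', hs2', hs3'⟩ h
    simp only [Prod.mk.injEq, Subtype.mk.injEq] at h
    apply Subtype.ext
    funext i
    show s i = s' i
    rw [← sP_eq (hc_of hσlen hρlen hs3) i, ← sP_eq (hc_of hσlen hρlen hs3') i]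
    exact image_iso_congr h.2 (congrFun h.1 i)
  · -- surjectivity
    rintro ⟨⟨P, hPd, hPu, hPc, hPp⟩, ⟨I, hIc, hIp⟩⟩
    have einj := iso_coe_injective I hIc
    set e : Fin K → Fin n := fun k => (I.orderIsoOfFin hIc k : Fin n) with he
    set s : Fin r → Finset (Fin n) := fun i => (P i).image e with hsdef
    have hU : Finset.univ.biUnion s = I := by
      ext a
      simp only [hsdef, Finset.mem_biUnion, Finset.mem_univ, true_and, Finset.mem_image]
      constructor
      · rintro ⟨i, k, hk, rfl⟩; exact (I.orderIsoOfFin hIc k).2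
      · intro ha
        have hk : (I.orderIsoOfFin hIc).symm ⟨a, ha⟩ ∈ Finset.univ.biUnion P :=
          hPu ▸ Finset.mem_univ _
        obtain ⟨i, _, hi⟩ := Finset.mem_biUnion.mp hk
        exact ⟨i, _, hi,
          congrArg Subtype.val ((I.orderIsoOfFin hIc).apply_symm_apply ⟨a, ha⟩)⟩
    have h1 : ∀ i, (s i).card = (π i).length := by
      intro i
      rw [hsdef]
      simp only
      rw [Finset.card_image_of_injective _ einj]
      exact hPc i
    have h2 : ∀ i, patL σ ((s i).image Fin.val) = π i := by
      intro i
      rw [hsdef]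
      simp only
      rw [he]
      rw [← main_fin hσnd hσlen I hIc (P i), hIp]
      exact hPp i
    have h3 : patL σ ((Finset.univ.biUnion s).image Fin.val) = ρ := by rw [hU]; exact hIp
    refine ⟨⟨s, h1, h2, h3⟩, ?_⟩
    simp only [Prod.mk.injEq]
    constructor
    · apply Subtype.ext
      funext i
      have hee : ∀ k, ((Finset.univ.biUnion s).orderIsoOfFin (hc_of hσlen hρlen h3) k : Fin n)
          = e k := fun k => iso_coe_congr hU _ _ k
      show Finset.univ.filter _ = P i
      simp only [hee]
      ext k
      simp only [Finset.mem_filter, Finset.mem_univ, true_and, hsdef, Finset.mem_image]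
      constructor
      · rintro ⟨k', hk', hkk⟩
        exact einj hkk ▸ hk'
      · intro hk; exact ⟨k, hk, rfl⟩
    · exact Subtype.ext hU
end
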